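/- If w is a weight satisfying the sharp reverse Hölder inequality (avg_Q w^{r})^{1/r} ≤ 2·avg_Q w for all cubes Q with r = 1 + 1/(τ_n[w]_{A_∞}), then for every 0 < ε ≤ 1, choosing α with αε = 1/(τ_n[w]_{A_∞}), one has M_{L(log L)^ε}(w) ≤ C·(ε·τ_n·[w]_{A_∞})^ε·M_{L^r}(w) ≤ C'·[w]_{A_∞}^ε·Mw pointwise, using log t ≤ t^α/α for t > 1. -/

import Mathlib

open Set MeasureTheory ENNReal

/-- A cube in `ℝⁿ` with lower-left corner `a` and side length `r`. -/
def cube {n : ℕ} (a : Fin n → ℝ) (r : ℝ) : Set (Fin n → ℝ) :=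
  {x | ∀ i, a i ≤ x i ∧ x i ≤ a i + r}


lemma cube_eq {n : ℕ} (a : Fin n → ℝ) (r : ℝ) :
    cube a r = Set.pi Set.univ (fun i => Set.Icc (a i) (a i + r)) := by
  ext x; simp [cube, Set.mem_pi, Set.mem_Icc, Pi.le_def, forall_and]

lemma cube_measurable {n : ℕ} (a : Fin n → ℝ) (r : ℝ) : MeasurableSet (cube a r) := by
  rw [cube_eq]; exact MeasurableSet.univ_pi fun i => measurableSet_Icc

lemma cube_volume {n : ℕ} (a : Fin n → ℝ) (r : ℝ) :
    volume (cube a r) = ENNReal.ofReal r ^ n := by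
  rw [cube_eq, volume_pi_pi]
  simp [Real.volume_Icc]

lemma cube_volume_ne_zero {n : ℕ} (a : Fin n → ℝ) {r : ℝ} (hr : 0 < r) :
    volume (cube a r) ≠ 0 := by
  rw [cube_volume]
  exact pow_ne_zero _ (by simpa using hr)

lemma cube_volume_ne_top {n : ℕ} (a : Fin n → ℝ) (r : ℝ) :
    volume (cube a r) ≠ ⊤ := by
  rw [cube_volume]
  exact ENNReal.pow_ne_top ENNReal.ofReal_ne_top



noncomputable def Lc (τ : ℝ) : ℝ := Real.exp (-(Real.exp 1)⁻¹) * min τ 1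

lemma Lc_pos {τ : ℝ} (hτ : 0 < τ) : 0 < Lc τ := by
  have h1 := Real.exp_pos (-(Real.exp 1)⁻¹)
  have h2 : (0:ℝ) < min τ 1 := lt_min hτ one_pos
  exact mul_pos h1 h2

lemma Lc_le_one {τ : ℝ} (hτ : 0 < τ) : Lc τ ≤ 1 := by
  have h1 : Real.exp (-(Real.exp 1)⁻¹) ≤ 1 := by
    rw [Real.exp_le_one_iff]
    have := Real.exp_pos 1
    simp only [Left.neg_nonpos_iff]
    positivity
  have h2 : min τ 1 ≤ 1 := min_le_right _ _
  have h0 : (0:ℝ) ≤ min τ 1 := le_of_lt (lt_min hτ one_pos)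
  calc Lc τ ≤ 1 * 1 := mul_le_mul h1 h2 h0 one_pos.le
  _ = 1 := by ring

lemma self_rpow_ge {ε : ℝ} (hε : 0 < ε) (hε1 : ε ≤ 1) :
    Real.exp (-(Real.exp 1)⁻¹) ≤ ε ^ ε := by
  rw [Real.rpow_def_of_pos hε]
  apply Real.exp_le_exp.mpr
  -- -(e)⁻¹ ≤ log ε * ε
  have hlog : Real.log ε⁻¹ ≤ ε⁻¹ * (Real.exp 1)⁻¹ := by
    have h := Real.log_le_sub_one_of_pos (x := ε⁻¹ / Real.exp 1) (by positivity)
    have : Real.log (ε⁻¹ / Real.exp 1) = Real.log ε⁻¹ - 1 := by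
      rw [Real.log_div (by positivity) (Real.exp_ne_zero 1), Real.log_exp]
    rw [div_eq_mul_inv] at h
    linarith [this ▸ h]
  rw [Real.log_inv] at hlog
  have := mul_le_mul_of_nonneg_left hlog hε.le
  have hne : ε ≠ 0 := ne_of_gt hε
  rw [← mul_assoc, mul_inv_cancel₀ hne, one_mul] at this
  nlinarith [this]

lemma Lc_le_pow {τ K ε : ℝ} (hτ : 0 < τ) (hK : 1 ≤ K) (hε : 0 < ε) (hε1 : ε ≤ 1) :
    Lc τ ≤ (ε * τ * K) ^ ε := by
  have h1 : (ε * τ) ^ ε ≤ (ε * τ * K) ^ ε := by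
    apply Real.rpow_le_rpow (by positivity) _ hε.le
    nlinarith [mul_pos hε hτ]
  have h2 : (ε * τ) ^ ε = ε ^ ε * τ ^ ε := Real.mul_rpow hε.le hτ.le
  have h3 : min τ 1 ≤ τ ^ ε := by
    rcases le_or_gt τ 1 with h | h
    · have : τ ^ (1:ℝ) ≤ τ ^ ε := Real.rpow_le_rpow_of_exponent_ge hτ h hε1
      rw [Real.rpow_one] at this
      calc min τ 1 ≤ τ := min_le_left _ _
      _ ≤ τ ^ ε := this
    · have : (1:ℝ) ≤ τ ^ ε := Real.one_le_rpow h.le hε.le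
      calc min τ 1 ≤ 1 := min_le_right _ _
      _ ≤ τ ^ ε := this
  have h4 := self_rpow_ge hε hε1
  have h0 : (0:ℝ) ≤ min τ 1 := le_of_lt (lt_min hτ one_pos)
  calc Lc τ ≤ ε ^ ε * τ ^ ε := mul_le_mul h4 h3 h0 (by positivity)
  _ = (ε * τ) ^ ε := h2.symm
  _ ≤ _ := h1

set_option maxHeartbeats 2000000 in
lemma key_pointwise {τ K ε : ℝ} (hτ : 0 < τ) (hK : 1 ≤ K) (hε : 0 < ε) (hε1 : ε ≤ 1)
    (t : ℝ) (ht : 0 ≤ t) :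
    t * (1 + max (Real.log t) 0) ^ ε ≤
      1/2 + ((2:ℝ) ^ (1/τ) + (2 / Lc τ) * (ε * τ * K) ^ ε) * t ^ (1 + 1/(τ*K)) := by
  have hτK : (0:ℝ) < τ * K := by nlinarith
  have hr1 : (0:ℝ) < 1/(τ*K) := by positivity
  have hrτ : 1/(τ*K) ≤ 1/τ := by
    exact one_div_le_one_div_of_le hτ (by nlinarith)
  have hpow2 : (1:ℝ) ≤ (2:ℝ) ^ (1/τ) := Real.one_le_rpow one_le_two (by positivity)
  have hX : (0:ℝ) < (ε * τ * K) ^ ε := Real.rpow_pos_of_pos (by nlinarith) _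
  have hLc := Lc_pos hτ
  have hB : (0:ℝ) < (2 / Lc τ) * (ε * τ * K) ^ ε := by positivity
  rcases le_or_gt t 1 with h1 | h1
  · -- t ≤ 1
    have hmax : max (Real.log t) 0 = 0 := max_eq_right (by
      rcases eq_or_lt_of_le ht with h0 | h0
      · simp [← h0]
      · exact Real.log_nonpos h0.le h1)
    rw [hmax, add_zero, Real.one_rpow, mul_one]
    rcases le_or_gt t (1/2) with h2 | h2
    · have : (0:ℝ) ≤ ((2:ℝ) ^ (1/τ) + (2 / Lc τ) * (ε * τ * K) ^ ε) * t ^ (1 + 1/(τ*K)) := by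
        have := Real.rpow_nonneg ht (1 + 1/(τ*K)); nlinarith
      linarith
    · -- 1/2 < t ≤ 1 : t ≤ 2^(1/τ) * t^r
      have ht0 : (0:ℝ) < t := by linarith
      have e1 : t ^ (1 + 1/(τ*K)) = t * t ^ (1/(τ*K)) := by
        rw [Real.rpow_add ht0, Real.rpow_one]
      have e2 : ((1:ℝ)/2) ^ (1/(τ*K)) ≤ t ^ (1/(τ*K)) :=
        Real.rpow_le_rpow (by norm_num) h2.le hr1.le
      have e3 : ((1:ℝ)/2) ^ (1/τ) ≤ ((1:ℝ)/2) ^ (1/(τ*K)) :=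
        Real.rpow_le_rpow_of_exponent_ge (by norm_num) (by norm_num) hrτ
      have e4 : ((1:ℝ)/2) ^ (1/τ) = ((2:ℝ) ^ (1/τ))⁻¹ := by
        rw [one_div, Real.inv_rpow (by norm_num)]
      have h2p : (0:ℝ) < (2:ℝ) ^ (1/τ) := by positivity
      have key : t ≤ (2:ℝ) ^ (1/τ) * t ^ (1 + 1/(τ*K)) := by
        rw [e1]
        have : ((2:ℝ) ^ (1/τ))⁻¹ ≤ t ^ (1/(τ*K)) := by rw [← e4]; linarith
        have := mul_le_mul_of_nonneg_left this ht0.le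
        calc t = t * ((2:ℝ) ^ (1/τ))⁻¹ * (2:ℝ) ^ (1/τ) := by
              field_simp
        _ ≤ t * t ^ (1/(τ*K)) * (2:ℝ) ^ (1/τ) := by nlinarith [Real.rpow_nonneg ht0.le (1/(τ*K))]
        _ = (2:ℝ) ^ (1/τ) * (t * t ^ (1/(τ*K))) := by ring
      have e5 : (0:ℝ) ≤ t ^ (1 + 1/(τ*K)) := Real.rpow_nonneg ht _
      nlinarith
  · -- t > 1
    have ht0 : (0:ℝ) < t := lt_trans one_pos h1
    have hlogpos : 0 < Real.log t := Real.log_pos h1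
    have hmax : max (Real.log t) 0 = Real.log t := max_eq_left hlogpos.le
    rw [hmax]
    set α : ℝ := (ε * τ * K)⁻¹ with hα
    have hαpos : 0 < α := by have : (0:ℝ) < ε*τ*K := by nlinarith
                             positivity
    have htα : (1:ℝ) ≤ t ^ α := Real.one_le_rpow h1.le hαpos.le
    have hlog : Real.log t ≤ (ε * τ * K) * t ^ α := by
      have h := Real.log_le_sub_one_of_pos (x := t ^ α) (by positivity)
      rw [Real.log_rpow ht0] at h
      have hmul := mul_le_mul_of_nonneg_left h (by positivity : (0:ℝ) ≤ (ε*τ*K))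
      have : (ε * τ * K) * (α * Real.log t) = Real.log t := by
        rw [hα]; field_simp
      nlinarith
    have stepA : 1 + Real.log t ≤ (1 + ε * τ * K) * t ^ α := by nlinarith
    have stepB : (1 + Real.log t) ^ ε ≤ (1 + ε * τ * K) ^ ε * t ^ (1/(τ*K)) := by
      have h := Real.rpow_le_rpow (by linarith) stepA hε.le
      rw [Real.mul_rpow (by nlinarith) (by positivity), ← Real.rpow_mul ht0.le] at h
      have hαε : α * ε = 1/(τ*K) := by rw [hα]; field_simp
      rwa [hαε] at h
    have stepC : (1 + ε * τ * K) ^ ε ≤ (2 / Lc τ) * (ε * τ * K) ^ ε := by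
      have hLcle := Lc_le_pow hτ hK hε hε1
      have hLc1 := Lc_le_one hτ
      rcases le_or_gt 1 (ε * τ * K) with hx | hx
      · have h2 : (1 + ε * τ * K) ^ ε ≤ (2 * (ε * τ * K)) ^ ε :=
          Real.rpow_le_rpow (by linarith) (by linarith) hε.le
        have h3 : (2 * (ε * τ * K)) ^ ε = 2 ^ ε * (ε * τ * K) ^ ε :=
          Real.mul_rpow (by norm_num) (by linarith)
        have h4 : (2:ℝ) ^ ε ≤ 2 := by
          calc (2:ℝ) ^ ε ≤ (2:ℝ) ^ (1:ℝ) := Real.rpow_le_rpow_of_exponent_le one_le_two hε1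
          _ = 2 := Real.rpow_one 2
        have h5 : (2:ℝ) ≤ 2 / Lc τ := by
          rw [le_div_iff₀ hLc]; linarith [hLc1, hLc]
        calc (1 + ε * τ * K) ^ ε ≤ 2 ^ ε * (ε * τ * K) ^ ε := by rw [← h3]; exact h2
        _ ≤ 2 * (ε * τ * K) ^ ε := mul_le_mul_of_nonneg_right h4 hX.le
        _ ≤ (2 / Lc τ) * (ε * τ * K) ^ ε := mul_le_mul_of_nonneg_right h5 hX.le
      · have hε2 : (0:ℝ) < ε * τ * K := by nlinarith
        have h2 : (1 + ε * τ * K) ^ ε ≤ (2:ℝ) ^ ε :=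
          Real.rpow_le_rpow (by linarith) (by linarith) hε.le
        have h4 : (2:ℝ) ^ ε ≤ 2 := by
          calc (2:ℝ) ^ ε ≤ (2:ℝ) ^ (1:ℝ) := Real.rpow_le_rpow_of_exponent_le one_le_two hε1
          _ = 2 := Real.rpow_one 2
        have h5 : (2:ℝ) ≤ (2 / Lc τ) * (ε * τ * K) ^ ε := by
          rw [div_mul_eq_mul_div, le_div_iff₀ hLc]; linarith [hLcle]
        linarith
    -- combine
    have hpos1 : (0:ℝ) ≤ (1 + Real.log t) ^ ε := Real.rpow_nonneg (by linarith) _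
    have e1 : t ^ (1 + 1/(τ*K)) = t * t ^ (1/(τ*K)) := by
      rw [Real.rpow_add ht0, Real.rpow_one]
    have htr : (0:ℝ) < t ^ (1/(τ*K)) := Real.rpow_pos_of_pos ht0 _
    have final : t * (1 + Real.log t) ^ ε ≤ (2 / Lc τ) * (ε * τ * K) ^ ε * t ^ (1 + 1/(τ*K)) := by
      rw [e1]
      calc t * (1 + Real.log t) ^ ε ≤ t * ((1 + ε * τ * K) ^ ε * t ^ (1/(τ*K))) :=
            mul_le_mul_of_nonneg_left stepB ht0.le
      _ ≤ t * (((2 / Lc τ) * (ε * τ * K) ^ ε) * t ^ (1/(τ*K))) :=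
            mul_le_mul_of_nonneg_left (mul_le_mul_of_nonneg_right stepC htr.le) ht0.le
      _ = (2 / Lc τ) * (ε * τ * K) ^ ε * (t * t ^ (1/(τ*K))) := by ring
    have e5 : (0:ℝ) ≤ t ^ (1 + 1/(τ*K)) := Real.rpow_nonneg ht _
    have h2p : (0:ℝ) < (2:ℝ) ^ (1/τ) := by positivity
    nlinarith [mul_nonneg h2p.le e5, final]

/-- The normalized Luxemburg norm `‖f‖_{A,Q}` over a set `Q`. -/
noncomputable def luxNorm {n : ℕ} (A : ℝ → ℝ) (Q : Set (Fin n → ℝ))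
    (f : (Fin n → ℝ) → ℝ) : ℝ≥0∞ :=
  sInf (ENNReal.ofReal '' {lam : ℝ | 0 < lam ∧
    (∫⁻ x in Q, ENNReal.ofReal (A (|f x| / lam))) / volume Q ≤ 1})

/-- The Orlicz maximal operator `M_A f(x) = sup_{Q ∋ x} ‖f‖_{A,Q}`. -/
noncomputable def orliczMax {n : ℕ} (A : ℝ → ℝ) (f : (Fin n → ℝ) → ℝ)
    (x : Fin n → ℝ) : ℝ≥0∞ :=
  ⨆ (a : Fin n → ℝ) (r : ℝ) (_ : 0 < r) (_ : x ∈ cube a r), luxNorm A (cube a r) f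

/-- The (uncentered, over cubes) Hardy–Littlewood maximal function. -/
noncomputable def maximalFn {n : ℕ} (f : (Fin n → ℝ) → ℝ≥0∞) (x : Fin n → ℝ) : ℝ≥0∞ :=
  ⨆ (a : Fin n → ℝ) (r : ℝ) (_ : 0 < r) (_ : x ∈ cube a r),
    (∫⁻ y in cube a r, f y) / volume (cube a r)

/-- The power maximal operator `M_{L^r} w(x) = sup_{Q ∋ x} (avg_Q w^r)^{1/r}`. -/
noncomputable def powerMax {n : ℕ} (r : ℝ) (w : (Fin n → ℝ) → ℝ)
    (x : Fin n → ℝ) : ℝ≥0∞ :=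
  ⨆ (a : Fin n → ℝ) (s : ℝ) (_ : 0 < s) (_ : x ∈ cube a s),
    ((∫⁻ y in cube a s, ENNReal.ofReal (w y) ^ r) / volume (cube a s)) ^ (1 / r)


set_option maxHeartbeats 1000000 in
lemma lux_le {n : ℕ} {τ K ε : ℝ} (hτ : 0 < τ) (hK : 1 ≤ K) (hε : 0 < ε) (hε1 : ε ≤ 1)
    (w : (Fin n → ℝ) → ℝ) (hw : Measurable w) (hw0 : ∀ x, 0 ≤ w x)
    (a : Fin n → ℝ) (s : ℝ) (hs : 0 < s) :
    luxNorm (fun t : ℝ => t * (1 + max (Real.log t) 0) ^ ε) (cube a s) w ≤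
      ENNReal.ofReal (2 * (2:ℝ)^(1/τ) / Lc τ + 4 / Lc τ) * ENNReal.ofReal ((ε*τ*K)^ε) *
        ((∫⁻ y in cube a s, ENNReal.ofReal (w y) ^ (1 + 1/(τ*K))) / volume (cube a s))
          ^ (1/(1 + 1/(τ*K))) := by
  have hLc := Lc_pos hτ
  have hLc1 := Lc_le_one hτ
  have hτK : (0:ℝ) < τ * K := by nlinarith
  set r : ℝ := 1 + 1/(τ*K) with hrdef
  have hr1 : (1:ℝ) ≤ r := by
    have : (0:ℝ) < 1/(τ*K) := by positivity
    simp only [hrdef]; linarith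
  have hr0 : (0:ℝ) < r := lt_of_lt_of_le one_pos hr1
  set Q : Set (Fin n → ℝ) := cube a s with hQdef
  set v : ℝ≥0∞ := volume Q with hvdef
  have hv0 : v ≠ 0 := cube_volume_ne_zero a hs
  have hvt : v ≠ ⊤ := cube_volume_ne_top a s
  set I : ℝ≥0∞ := ∫⁻ y in Q, ENNReal.ofReal (w y) ^ r with hIdef
  set N : ℝ≥0∞ := (I / v) ^ (1/r) with hNdef
  set c₀ : ℝ := 2 * (2:ℝ)^(1/τ) / Lc τ + 4 / Lc τ with hc₀
  set X : ℝ := (ε*τ*K)^ε with hXdef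
  have hp2 : (1:ℝ) ≤ (2:ℝ)^(1/τ) := Real.one_le_rpow one_le_two (by positivity)
  have hXpos : (0:ℝ) < X := Real.rpow_pos_of_pos (by nlinarith) _
  have hXL : Lc τ ≤ X := Lc_le_pow hτ hK hε hε1
  have hofc₀ : ENNReal.ofReal c₀ ≠ 0 := by
    have : (0:ℝ) < c₀ := by rw [hc₀]; positivity
    exact (ENNReal.ofReal_pos.mpr this).ne'
  by_cases hNtop : N = ⊤
  · rw [hNtop, ENNReal.mul_top]
    · exact le_top
    · exact mul_ne_zero hofc₀ (by simpa using (ENNReal.ofReal_pos.mpr hXpos).ne')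
  by_cases hN0 : N = 0
  · -- w = 0 a.e. on Q; luxNorm = 0
    have hI0 : I = 0 := by
      have h1 : I / v = 0 := by
        by_contra h
        have := ENNReal.rpow_eq_zero_iff.mp (hNdef ▸ hN0)
        rcases this with ⟨h1, _⟩ | ⟨h1, h2⟩
        · exact h h1
        · exact absurd h2 (not_lt.mpr (by positivity : (0:ℝ) ≤ 1/r))
      rcases ENNReal.div_eq_zero_iff.mp h1 with h | h
      · exact h
      · exact absurd h hvt
    have hmeas : Measurable fun y => ENNReal.ofReal (w y) ^ r :=
      ENNReal.continuous_rpow_const.measurable.comp hw.ennreal_ofReal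
    have hae : ∀ᵐ y ∂(volume.restrict Q), ENNReal.ofReal (w y) ^ r = 0 := by
      have := (lintegral_eq_zero_iff hmeas).mp hI0
      filter_upwards [this] with y hy using hy
    have haew : ∀ᵐ y ∂(volume.restrict Q), w y = 0 := by
      filter_upwards [hae] with y hy
      rcases ENNReal.rpow_eq_zero_iff.mp hy with ⟨h1, _⟩ | ⟨_, h2⟩
      · have := ENNReal.ofReal_eq_zero.mp h1
        exact le_antisymm this (hw0 y)
      · exact absurd h2 (not_lt.mpr hr0.le)
    have hmem : ∀ lam : ℝ, 0 < lam →
        (∫⁻ x in Q, ENNReal.ofReal ((|w x| / lam) * (1 + max (Real.log (|w x| / lam)) 0) ^ ε)) / v ≤ 1 := by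
      intro lam hlam
      have : (∫⁻ x in Q, ENNReal.ofReal ((|w x| / lam) * (1 + max (Real.log (|w x| / lam)) 0) ^ ε)) = 0 := by
        rw [← lintegral_zero (μ := volume.restrict Q)]
        apply lintegral_congr_ae
        filter_upwards [haew] with y hy
        rw [hy]
        simp
      rw [this]
      simp
    have hlux : luxNorm (fun t : ℝ => t * (1 + max (Real.log t) 0) ^ ε) Q w = 0 := by
      refine le_antisymm ?_ zero_le
      refine ENNReal.le_of_forall_pos_le_add fun δ hδ _ => ?_
      rw [zero_add]
      calc luxNorm _ Q w ≤ ENNReal.ofReal δ := by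
            apply sInf_le
            exact ⟨(δ:ℝ), ⟨by exact_mod_cast hδ, hmem _ (by exact_mod_cast hδ)⟩, rfl⟩
      _ = (δ : ℝ≥0∞) := ENNReal.ofReal_coe_nnreal
    rw [hlux]
    exact zero_le
  -- main case
  have hNrpos : 0 < N.toReal := ENNReal.toReal_pos hN0 hNtop
  set Nr : ℝ := N.toReal with hNr
  set M₂ : ℝ := (2:ℝ)^(1/τ) + (2 / Lc τ) * X with hM₂
  set M' : ℝ := c₀ * X with hM'
  have hM₂pos : (0:ℝ) < M₂ := by positivity
  have key1 : 2 * (2:ℝ)^(1/τ) ≤ 2 * (2:ℝ)^(1/τ) / Lc τ * X := by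
    rw [div_mul_eq_mul_div, le_div_iff₀ hLc]
    nlinarith
  have eM' : M' = 2 * (2:ℝ)^(1/τ) / Lc τ * X + 4 / Lc τ * X := by rw [hM', hc₀]; ring
  have eM₂ : 2 * M₂ = 2 * (2:ℝ)^(1/τ) + 4 / Lc τ * X := by rw [hM₂]; ring
  have h2M : 2 * M₂ ≤ M' := by
    have h4 : (0:ℝ) ≤ 4 / Lc τ * X := by positivity
    clear_value X M₂ M'
    linarith [key1, eM', eM₂]
  have hM'2 : (2:ℝ) ≤ M' := by
    have h4 : (0:ℝ) ≤ 4 / Lc τ * X := by positivity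
    clear_value X M₂ M'
    linarith [key1, eM', hp2]
  have hM'pos : (0:ℝ) < M' := by linarith
  set lam : ℝ := M' * Nr with hlam
  have hlampos : (0:ℝ) < lam := by positivity
  set L : ℝ≥0∞ := ENNReal.ofReal lam with hL
  have hL0 : L ≠ 0 := (ENNReal.ofReal_pos.mpr hlampos).ne'
  have hLt : L ≠ ⊤ := ENNReal.ofReal_ne_top
  have hLr0 : L ^ r ≠ 0 := by
    intro h
    rcases ENNReal.rpow_eq_zero_iff.mp h with ⟨h1, _⟩ | ⟨_, h2⟩
    · exact hL0 h1
    · exact absurd h2 (not_lt.mpr hr0.le)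
  set c : ℝ≥0∞ := ENNReal.ofReal M₂ / L ^ r with hc
  have hct : c ≠ ⊤ := by
    rw [hc, div_eq_mul_inv]
    exact ENNReal.mul_ne_top ENNReal.ofReal_ne_top (ENNReal.inv_ne_top.mpr hLr0)
  have hptw : ∀ y, ENNReal.ofReal ((|w y| / lam) * (1 + max (Real.log (|w y| / lam)) 0) ^ ε)
      ≤ ENNReal.ofReal (1/2) + c * ENNReal.ofReal (w y) ^ r := by
    intro y
    have habs : |w y| = w y := abs_of_nonneg (hw0 y)
    have ht : (0:ℝ) ≤ w y / lam := div_nonneg (hw0 y) hlampos.le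
    have hkey := key_pointwise hτ hK hε hε1 (w y / lam) ht
    rw [habs]
    calc ENNReal.ofReal ((w y / lam) * (1 + max (Real.log (w y / lam)) 0) ^ ε)
        ≤ ENNReal.ofReal (1/2 + M₂ * (w y/lam) ^ r) := by
          apply ENNReal.ofReal_le_ofReal
          rw [hM₂]
          exact hkey
    _ = ENNReal.ofReal (1/2) + ENNReal.ofReal M₂ * ENNReal.ofReal ((w y/lam) ^ r) := by
          rw [ENNReal.ofReal_add (by norm_num) (by positivity), ENNReal.ofReal_mul hM₂pos.le]
    _ = ENNReal.ofReal (1/2) + ENNReal.ofReal M₂ * (ENNReal.ofReal (w y) / L) ^ r := by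
          rw [← ENNReal.ofReal_rpow_of_nonneg ht hr0.le, ENNReal.ofReal_div_of_pos hlampos]
    _ = ENNReal.ofReal (1/2) + c * ENNReal.ofReal (w y) ^ r := by
          rw [ENNReal.div_rpow_of_nonneg _ _ hr0.le, hc]
          simp only [div_eq_mul_inv]
          ring
  have hint : (∫⁻ y in Q, ENNReal.ofReal ((|w y| / lam) * (1 + max (Real.log (|w y| / lam)) 0) ^ ε))
      ≤ ENNReal.ofReal (1/2) * v + c * I := by
    calc (∫⁻ y in Q, ENNReal.ofReal ((|w y| / lam) * (1 + max (Real.log (|w y| / lam)) 0) ^ ε))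
        ≤ ∫⁻ y in Q, (ENNReal.ofReal (1/2) + c * ENNReal.ofReal (w y) ^ r) := lintegral_mono hptw
    _ = ENNReal.ofReal (1/2) * v + c * I := by
        rw [lintegral_add_left measurable_const, setLIntegral_const,
          lintegral_const_mul' _ _ hct]
  have hNrow0 : N ^ r ≠ 0 := by
    intro h
    rcases ENNReal.rpow_eq_zero_iff.mp h with ⟨h1, _⟩ | ⟨_, h2⟩
    · exact hN0 h1
    · exact absurd h2 (not_lt.mpr hr0.le)
  have hNrowt : N ^ r ≠ ⊤ := by
    intro h
    rcases ENNReal.rpow_eq_top_iff.mp h with ⟨h1, h2⟩ | ⟨h1, _⟩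
    · exact absurd h2 (not_lt.mpr hr0.le)
    · exact hNtop h1
  have hIN : I = N ^ r * v := by
    have hNrI : N ^ r = I / v := by
      rw [hNdef, ← ENNReal.rpow_mul, one_div_mul_cancel hr0.ne', ENNReal.rpow_one]
    rw [hNrI, ENNReal.div_mul_cancel hv0 hvt]
  have hM'r0 : ENNReal.ofReal M' ^ r ≠ 0 := by
    intro h
    rcases ENNReal.rpow_eq_zero_iff.mp h with ⟨h1, _⟩ | ⟨_, h2⟩
    · exact (ENNReal.ofReal_pos.mpr hM'pos).ne' h1
    · exact absurd h2 (not_lt.mpr hr0.le)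
  have hM'rt : ENNReal.ofReal M' ^ r ≠ ⊤ := by
    intro h
    rcases ENNReal.rpow_eq_top_iff.mp h with ⟨h1, h2⟩ | ⟨h1, _⟩
    · exact absurd h2 (not_lt.mpr hr0.le)
    · exact ENNReal.ofReal_ne_top h1
  have hLeq : L = ENNReal.ofReal M' * N := by
    rw [hL, hlam, ENNReal.ofReal_mul hM'pos.le, hNr, ENNReal.ofReal_toReal hNtop]
  have hLrN : L ^ r = ENNReal.ofReal M' ^ r * N ^ r := by
    rw [hLeq, ENNReal.mul_rpow_of_nonneg _ _ hr0.le]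
  have hcI : c * I = ENNReal.ofReal M₂ / ENNReal.ofReal M' ^ r * v := by
    rw [hc, hIN, hLrN, div_eq_mul_inv, div_eq_mul_inv,
      ENNReal.mul_inv (Or.inl hM'r0) (Or.inl hM'rt)]
    have hcan : (N ^ r)⁻¹ * N ^ r = 1 := ENNReal.inv_mul_cancel hNrow0 hNrowt
    calc ENNReal.ofReal M₂ * ((ENNReal.ofReal M' ^ r)⁻¹ * (N ^ r)⁻¹) * (N ^ r * v)
        = ENNReal.ofReal M₂ * (ENNReal.ofReal M' ^ r)⁻¹ * ((N ^ r)⁻¹ * N ^ r) * v := by ring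
    _ = ENNReal.ofReal M₂ * (ENNReal.ofReal M' ^ r)⁻¹ * v := by rw [hcan, mul_one]
  have hdivle : ENNReal.ofReal M₂ / ENNReal.ofReal M' ^ r ≤ ENNReal.ofReal (M₂ / M') := by
    have h1 : ENNReal.ofReal M' ^ (1:ℝ) ≤ ENNReal.ofReal M' ^ r :=
      ENNReal.rpow_le_rpow_of_exponent_le (ENNReal.one_le_ofReal.mpr (by linarith)) hr1
    rw [ENNReal.rpow_one] at h1
    calc ENNReal.ofReal M₂ / ENNReal.ofReal M' ^ r ≤ ENNReal.ofReal M₂ / ENNReal.ofReal M' :=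
          ENNReal.div_le_div_left h1 _
    _ = ENNReal.ofReal (M₂ / M') := (ENNReal.ofReal_div_of_pos hM'pos).symm
  have hhalf : ENNReal.ofReal (1/2) + ENNReal.ofReal (M₂ / M') ≤ 1 := by
    rw [← ENNReal.ofReal_add (by norm_num) (by positivity), ← ENNReal.ofReal_one]
    apply ENNReal.ofReal_le_ofReal
    have hdle : M₂ / M' ≤ 1/2 := by rw [div_le_iff₀ hM'pos]; linarith
    linarith
  have hmem : (∫⁻ x in Q, ENNReal.ofReal ((|w x| / lam) * (1 + max (Real.log (|w x| / lam)) 0) ^ ε)) / v ≤ 1 := by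
    rw [ENNReal.div_le_iff hv0 hvt, one_mul]
    calc (∫⁻ x in Q, ENNReal.ofReal ((|w x| / lam) * (1 + max (Real.log (|w x| / lam)) 0) ^ ε))
        ≤ ENNReal.ofReal (1/2) * v + c * I := hint
    _ = ENNReal.ofReal (1/2) * v + ENNReal.ofReal M₂ / ENNReal.ofReal M' ^ r * v := by rw [hcI]
    _ ≤ ENNReal.ofReal (1/2) * v + ENNReal.ofReal (M₂ / M') * v :=
          add_le_add_right (mul_le_mul_left hdivle v) _
    _ = (ENNReal.ofReal (1/2) + ENNReal.ofReal (M₂ / M')) * v := (add_mul _ _ _).symm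
    _ ≤ 1 * v := mul_le_mul_left hhalf v
    _ = v := one_mul v
  calc luxNorm (fun t : ℝ => t * (1 + max (Real.log t) 0) ^ ε) Q w ≤ ENNReal.ofReal lam :=
        sInf_le ⟨lam, ⟨hlampos, hmem⟩, rfl⟩
  _ = ENNReal.ofReal c₀ * ENNReal.ofReal X * N := by
        rw [hlam, hM', mul_assoc, ENNReal.ofReal_mul (by positivity : (0:ℝ) ≤ c₀),
          ENNReal.ofReal_mul hXpos.le, hNr, ENNReal.ofReal_toReal hNtop, mul_assoc]

/-- If `w` satisfies the sharp reverse Hölder inequality with exponent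
`r = 1 + 1/(τₙ K)` (where `K = [w]_{A∞}`), then for `0 < ε ≤ 1`,
`M_{L(log L)^ε} w ≤ C (ε τₙ K)^ε M_{L^r} w ≤ C' K^ε M w` pointwise. -/
theorem loglog_max_vs_max (n : ℕ) (τ : ℝ) (hτ : 0 < τ) :
    ∃ C C' : ℝ≥0∞, 0 < C ∧ C ≠ ⊤ ∧ 0 < C' ∧ C' ≠ ⊤ ∧
      ∀ (w : (Fin n → ℝ) → ℝ) (_ : Measurable w) (_ : ∀ x, 0 ≤ w x)
        (K : ℝ) (_ : 1 ≤ K) (ε : ℝ) (_ : 0 < ε) (_ : ε ≤ 1),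
        -- sharp reverse Hölder inequality with exponent `r = 1 + 1/(τ K)`
        (∀ (a : Fin n → ℝ) (s : ℝ), 0 < s →
          ((∫⁻ y in cube a s, ENNReal.ofReal (w y) ^ (1 + 1 / (τ * K))) /
              volume (cube a s)) ^ (1 / (1 + 1 / (τ * K)))
            ≤ 2 * (∫⁻ y in cube a s, ENNReal.ofReal (w y)) / volume (cube a s)) →
        ∀ x : Fin n → ℝ,
          orliczMax (fun t : ℝ => t * (1 + max (Real.log t) 0) ^ ε) w x ≤
              C * ENNReal.ofReal ((ε * τ * K) ^ ε) * powerMax (1 + 1 / (τ * K)) w x ∧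
            C * ENNReal.ofReal ((ε * τ * K) ^ ε) * powerMax (1 + 1 / (τ * K)) w x ≤
              C' * ENNReal.ofReal (K ^ ε) * maximalFn (fun y => ENNReal.ofReal (w y)) x := by
  have hLc := Lc_pos hτ
  have hc₀pos : (0:ℝ) < 2 * (2:ℝ)^(1/τ) / Lc τ + 4 / Lc τ := by positivity
  set C : ℝ≥0∞ := ENNReal.ofReal (2 * (2:ℝ)^(1/τ) / Lc τ + 4 / Lc τ) with hC
  have hCpos : 0 < C := ENNReal.ofReal_pos.mpr hc₀pos
  have hmaxpos : (0:ℝ) < max 1 τ := lt_of_lt_of_le one_pos (le_max_left _ _)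
  refine ⟨C, 2 * C * ENNReal.ofReal (max 1 τ), hCpos, ENNReal.ofReal_ne_top, ?_, ?_, ?_⟩
  · rw [pos_iff_ne_zero]
    exact mul_ne_zero (mul_ne_zero (by norm_num) hCpos.ne')
      (ENNReal.ofReal_pos.mpr hmaxpos).ne'
  · exact ENNReal.mul_ne_top (ENNReal.mul_ne_top (by norm_num) ENNReal.ofReal_ne_top)
      ENNReal.ofReal_ne_top
  intro w hw hw0 K hK ε hε hε1 hRH x
  constructor
  · refine iSup_le fun a => iSup_le fun s => iSup_le fun hs => iSup_le fun hx => ?_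
    refine le_trans (lux_le hτ hK hε hε1 w hw hw0 a s hs) ?_
    apply mul_le_mul_right
    exact le_iSup_of_le a (le_iSup_of_le s (le_iSup_of_le hs (le_iSup_of_le hx le_rfl)))
  · have h2 : powerMax (1 + 1/(τ*K)) w x ≤ 2 * maximalFn (fun y => ENNReal.ofReal (w y)) x := by
      refine iSup_le fun a => iSup_le fun s => iSup_le fun hs => iSup_le fun hx => ?_
      refine le_trans (hRH a s hs) ?_
      rw [mul_div_assoc]
      apply mul_le_mul_right
      exact le_iSup_of_le a (le_iSup_of_le s (le_iSup_of_le hs (le_iSup_of_le hx le_rfl)))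
    have hE : ENNReal.ofReal ((ε*τ*K)^ε) ≤ ENNReal.ofReal (max 1 τ) * ENNReal.ofReal (K^ε) := by
      rw [← ENNReal.ofReal_mul hmaxpos.le]
      apply ENNReal.ofReal_le_ofReal
      have e1 : (ε*τ*K)^ε = ε^ε * τ^ε * K^ε := by
        rw [Real.mul_rpow (by positivity) (by linarith : (0:ℝ) ≤ K), Real.mul_rpow hε.le hτ.le]
      rw [e1]
      have h1 : ε^ε ≤ 1 := Real.rpow_le_one hε.le hε1 hε.le
      have hτε : τ^ε ≤ max 1 τ := by
        rcases le_or_gt τ 1 with h | h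
        · exact le_trans (Real.rpow_le_one hτ.le h hε.le) (le_max_left _ _)
        · refine le_trans ?_ (le_max_right _ _)
          calc τ^ε ≤ τ^(1:ℝ) := Real.rpow_le_rpow_of_exponent_le h.le hε1
          _ = τ := Real.rpow_one τ
      have hK0 : (0:ℝ) ≤ K^ε := Real.rpow_nonneg (by linarith) _
      have hh := mul_le_mul_of_nonneg_right
        (mul_le_mul h1 hτε (Real.rpow_nonneg hτ.le ε) zero_le_one) hK0
      linarith [hh]
    calc C * ENNReal.ofReal ((ε * τ * K) ^ ε) * powerMax (1 + 1 / (τ * K)) w x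
        ≤ C * (ENNReal.ofReal (max 1 τ) * ENNReal.ofReal (K^ε)) *
          (2 * maximalFn (fun y => ENNReal.ofReal (w y)) x) :=
          mul_le_mul' (mul_le_mul_right hE _) h2
    _ = 2 * C * ENNReal.ofReal (max 1 τ) * ENNReal.ofReal (K ^ ε) *
          maximalFn (fun y => ENNReal.ofReal (w y)) x := by ring
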